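/- With the data (k, 𝔛, V, d) and the auxiliary Lie algebra g̃ as in the context, assume 𝔛 has enough modules. Then the canonical Lie algebra homomorphism ι₀ : 𝔛 → g̃ (the composite of x ↦ (0,x) with the quotient map) is injective. -/

import Mathlib

/-! ## Semidirect product of Lie algebras along an action by derivations -/

variable (R : Type*) [CommRing R] (L : Type*) [LieRing L] [LieAlgebra R L]
  (M : Type*) [LieRing M] [LieAlgebra R M]

/-- Type synonym for the semidirect product of Lie algebras. -/
@[nolint unusedArguments]
def LieSemidirectProduct (_δ : M →ₗ⁅R⁆ LieDerivation R L L) : Type _ := L × M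

namespace LieSemidirectProduct

variable {R L M}
variable (δ : M →ₗ⁅R⁆ LieDerivation R L L)

instance : AddCommGroup (LieSemidirectProduct R L M δ) :=
  inferInstanceAs (AddCommGroup (L × M))

instance : Module R (LieSemidirectProduct R L M δ) :=
  inferInstanceAs (Module R (L × M))

/-- Build an element of the semidirect product. -/
def mk (t : L) (x : M) : LieSemidirectProduct R L M δ := (t, x)

@[simp] lemma mk_fst (t : L) (x : M) : (mk δ t x).1 = t := rfl
@[simp] lemma mk_snd (t : L) (x : M) : (mk δ t x).2 = x := rfl

instance : LieRing (LieSemidirectProduct R L M δ) where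
  bracket p q := (⁅p.1, q.1⁆ + δ p.2 q.1 - δ q.2 p.1, ⁅p.2, q.2⁆)
  add_lie p q r := by
    show Prod.mk _ _ = Prod.mk (_ + _) (_ + _)
    refine congrArg₂ Prod.mk ?_ (add_lie _ _ _)
    show ⁅p.1 + q.1, r.1⁆ + δ (p.2 + q.2) r.1 - δ r.2 (p.1 + q.1) = _
    simp only [add_lie, LieDerivation.add_apply, map_add]
    abel
  lie_add p q r := by
    show Prod.mk _ _ = Prod.mk (_ + _) (_ + _)
    refine congrArg₂ Prod.mk ?_ (lie_add _ _ _)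
    show ⁅p.1, q.1 + r.1⁆ + δ p.2 (q.1 + r.1) - δ (q.2 + r.2) p.1 = _
    simp only [lie_add, LieDerivation.add_apply, map_add]
    abel
  lie_self p := by
    show Prod.mk _ _ = (0 : L × M)
    rw [Prod.mk_eq_zero]
    constructor
    · show ⁅p.1, p.1⁆ + δ p.2 p.1 - δ p.2 p.1 = 0
      simp
    · exact lie_self _
  leibniz_lie p q r := by
    show Prod.mk _ _ = Prod.mk (_ + _) (_ + _)
    refine congrArg₂ Prod.mk ?_ (leibniz_lie _ _ _)
    show ⁅p.1, ⁅q.1, r.1⁆ + δ q.2 r.1 - δ r.2 q.1⁆ + δ p.2 (⁅q.1, r.1⁆ + δ q.2 r.1 - δ r.2 q.1)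
        - δ ⁅q.2, r.2⁆ p.1
      = (⁅⁅p.1, q.1⁆ + δ p.2 q.1 - δ q.2 p.1, r.1⁆ + δ ⁅p.2, q.2⁆ r.1
          - δ r.2 (⁅p.1, q.1⁆ + δ p.2 q.1 - δ q.2 p.1))
        + (⁅q.1, ⁅p.1, r.1⁆ + δ p.2 r.1 - δ r.2 p.1⁆ + δ q.2 (⁅p.1, r.1⁆ + δ p.2 r.1 - δ r.2 p.1)
          - δ ⁅p.2, r.2⁆ q.1)
    have hskew : ⁅δ r.2 p.1, q.1⁆ = -⁅q.1, δ r.2 p.1⁆ := (lie_skew _ _).symm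
    simp only [lie_add, add_lie, lie_sub, sub_lie, map_add, map_sub,
      LieHom.map_lie, LieDerivation.lie_apply, LieDerivation.apply_lie_eq_add, hskew,
      LieDerivation.add_apply, LieDerivation.sub_apply]
    rw [leibniz_lie p.1 q.1 r.1]
    abel

instance : LieAlgebra R (LieSemidirectProduct R L M δ) where
  lie_smul c p q := by
    show Prod.mk _ _ = Prod.mk (c • _) (c • _)
    refine congrArg₂ Prod.mk ?_ (lie_smul _ _ _)
    show ⁅p.1, c • q.1⁆ + δ p.2 (c • q.1) - δ (c • q.2) p.1 = c • (⁅p.1, q.1⁆ + δ p.2 q.1 - δ q.2 p.1)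
    simp only [lie_smul, LieDerivation.smul_apply, smul_add, smul_sub, map_smul]

@[simp] lemma bracket_def (p q : LieSemidirectProduct R L M δ) :
    ⁅p, q⁆ = (mk δ (⁅p.1, q.1⁆ + δ p.2 q.1 - δ q.2 p.1) ⁅p.2, q.2⁆) := rfl

/-- The canonical inclusion of `L` into the semidirect product. -/
def inl : L →ₗ⁅R⁆ LieSemidirectProduct R L M δ where
  toFun t := mk δ t 0
  map_add' t s := by
    show Prod.mk _ _ = Prod.mk (_ + _) (_ + _)
    simp [mk]
  map_smul' c t := by
    show Prod.mk _ _ = Prod.mk (c • _) (c • _)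
    simp [mk]
  map_lie' {t s} := by
    show mk δ ⁅t, s⁆ 0 = mk δ (⁅t, s⁆ + δ 0 s - δ 0 t) ⁅(0 : M), (0 : M)⁆
    simp [mk] <;> rfl

/-- The canonical inclusion of `M` into the semidirect product. -/
def inr : M →ₗ⁅R⁆ LieSemidirectProduct R L M δ where
  toFun x := mk δ 0 x
  map_add' x y := by
    show Prod.mk _ _ = Prod.mk (_ + _) (_ + _)
    simp [mk]
  map_smul' c x := by
    show Prod.mk _ _ = Prod.mk (c • _) (c • _)
    simp [mk]
  map_lie' {x y} := by
    show mk δ 0 ⁅x, y⁆ = mk δ (⁅(0 : L), (0 : L)⁆ + δ x 0 - δ y 0) ⁅x, y⁆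
    simp [mk] <;> rfl

end LieSemidirectProduct

/-! ## The contragredient construction -/

open TensorProduct

attribute [local instance] LieRing.ofAssociativeRing

namespace Contragredient

variable (k : Type*) [Field k]
variable {X : Type*} [LieRing X] [LieAlgebra k X]
variable (V : Type*) [AddCommGroup V] [Module k V]

/-- The action of `X` on the dual of `V` induced by a representation `φ`:
`(x · f) v = - f (x · v)`. -/
def dualAct (φ : X →ₗ⁅k⁆ Module.End k V) (x : X) (f : Module.Dual k V) :
    Module.Dual k V :=
  -(f ∘ₗ φ x)

/-- The free Lie algebra on `V ⊕ V*`: the Lie subalgebra of the tensor algebra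
(with commutator bracket) generated by `V ⊕ V*`. -/
def F : LieSubalgebra k (TensorAlgebra k (V × Module.Dual k V)) :=
  LieSubalgebra.lieSpan k _ (Set.range (TensorAlgebra.ι k))

/-- The canonical inclusion of `V ⊕ V*` into the free Lie algebra on it. -/
def ιF (w : V × Module.Dual k V) : F k V :=
  ⟨TensorAlgebra.ι k w, LieSubalgebra.subset_lieSpan ⟨w, rfl⟩⟩

variable {V}
variable (δ : X →ₗ⁅k⁆ LieDerivation k (F k V) (F k V))
variable (d : V ⊗[k] Module.Dual k V →ₗ[k] X)

/-- The semidirect product `FLie(V ⊕ V*) ⋊ X`. -/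
abbrev SD := LieSemidirectProduct k (F k V) X δ

/-- The defining relations of the auxiliary contragredient Lie algebra. -/
def rel : Set (SD k δ) :=
  { p | ∃ (v : V) (f : Module.Dual k V),
      p = LieSemidirectProduct.mk δ ⁅ιF k V (v, 0), ιF k V (0, f)⁆ (-(d (v ⊗ₜ[k] f))) }

/-- The ideal of relations. -/
def I0 : LieIdeal k (SD k δ) := LieSubmodule.lieSpan k _ (rel k δ d)

/-- The auxiliary contragredient Lie algebra `g̃(ρ, d)`. -/
abbrev gt := SD k δ ⧸ I0 k δ d

/-- The quotient map onto the auxiliary contragredient Lie algebra. -/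
def π : SD k δ →ₗ⁅k⁆ gt k δ d :=
  { (I0 k δ d).toSubmodule.mkQ with
    map_lie' := fun {_ _} => rfl }

/-- The canonical map from `X` to `g̃`. -/
def ι₀ : X →ₗ⁅k⁆ gt k δ d := (π k δ d).comp (LieSemidirectProduct.inr δ)

/-- The canonical map from `V` to `g̃`. -/
def gtV (v : V) : gt k δ d := π k δ d (LieSemidirectProduct.mk δ (ιF k V (v, 0)) 0)

/-- The canonical map from `V*` to `g̃`. -/
def gtD (f : Module.Dual k V) : gt k δ d :=
  π k δ d (LieSemidirectProduct.mk δ (ιF k V (0, f)) 0)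

/-- The positive subalgebra `n₊` of `g̃`: the Lie subalgebra generated by the image of `V`. -/
def nPlus : LieSubalgebra k (gt k δ d) :=
  LieSubalgebra.lieSpan k _ (Set.range (gtV k δ d))

/-- The negative subalgebra `n₋` of `g̃`: the Lie subalgebra generated by the image of `V*`. -/
def nMinus : LieSubalgebra k (gt k δ d) :=
  LieSubalgebra.lieSpan k _ (Set.range (gtD k δ d))

universe w

/-- `X` has enough modules: for every nonzero `x : X` there is a representation of `X`
on which `x` acts nontrivially. -/
def HasEnoughModules (k : Type*) [Field k] (X : Type*) [LieRing X] [LieAlgebra k X] : Prop :=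
  ∀ x : X, x ≠ 0 →
    ∃ (W : Type w) (_ : AddCommGroup W) (_ : Module k W)
      (ρW : X →ₗ⁅k⁆ Module.End k W), ρW x ≠ 0

end Contragredient

namespace IotaAux

variable (k : Type*) [Field k]
variable (D : Type*) [AddCommGroup D] [Module k D]
variable (W : Type*) [AddCommGroup W] [Module k W]

/-- Left multiplication operator on `T(D) ⊗ W`. -/
noncomputable def Lm (a : TensorAlgebra k D) :
    Module.End k (TensorAlgebra k D ⊗[k] W) :=
  LinearMap.rTensor W (LinearMap.mulLeft k a)

variable {k D W}

@[simp] lemma Lm_tmul (a b : TensorAlgebra k D) (w : W) :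
    Lm k D W a (b ⊗ₜ w) = (a * b) ⊗ₜ w := rfl

lemma Lm_mul (a b : TensorAlgebra k D) :
    Lm k D W (a * b) = Lm k D W a ∘ₗ Lm k D W b := by
  apply TensorProduct.ext'
  intro c w
  simp [Lm_tmul, mul_assoc]

@[simp] lemma Lm_one : Lm k D W 1 = LinearMap.id := by
  apply TensorProduct.ext'
  intro c w
  simp

lemma Lm_add (a b : TensorAlgebra k D) :
    Lm k D W (a + b) = Lm k D W a + Lm k D W b := by
  apply TensorProduct.ext'
  intro c w
  simp [add_mul, add_tmul]

lemma Lm_smul (r : k) (a : TensorAlgebra k D) :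
    Lm k D W (r • a) = r • Lm k D W a := by
  apply TensorProduct.ext'
  intro c w
  simp [smul_mul_assoc, smul_tmul']

lemma Lm_algebraMap (r : k) :
    Lm k D W (algebraMap k (TensorAlgebra k D) r) = r • LinearMap.id := by
  have h : algebraMap k (TensorAlgebra k D) r = r • (1 : TensorAlgebra k D) := by
    rw [Algebra.smul_def, mul_one]
  rw [h, Lm_smul, Lm_one]


variable (k D W)

/-- The auxiliary algebra hom into `End (U × U)` used to build twisted derivations. -/
noncomputable def Psi (c : D →ₗ[k] Module.End k (TensorAlgebra k D ⊗[k] W)) :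
    TensorAlgebra k D →ₐ[k] Module.End k ((TensorAlgebra k D ⊗[k] W) × (TensorAlgebra k D ⊗[k] W)) :=
  TensorAlgebra.lift k
    { toFun := fun f =>
        (Lm k D W (TensorAlgebra.ι k f)).prodMap (Lm k D W (TensorAlgebra.ι k f))
          + LinearMap.prod ((c f) ∘ₗ LinearMap.snd k _ _) 0
      map_add' := fun f g => by
        apply LinearMap.ext; intro p
        simp only [LinearMap.add_apply, LinearMap.prodMap_apply, LinearMap.prod_apply,
          LinearMap.comp_apply, LinearMap.snd_apply, LinearMap.zero_apply, Pi.prod,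
          map_add, Lm_add, Prod.mk_add_mk, Prod.fst_add, Prod.snd_add]
        refine Prod.ext ?_ ?_ <;> simp <;> abel
      map_smul' := fun r f => by
        apply LinearMap.ext; intro p
        simp only [LinearMap.smul_apply, LinearMap.add_apply, LinearMap.prodMap_apply,
          LinearMap.prod_apply, LinearMap.comp_apply, LinearMap.snd_apply,
          LinearMap.zero_apply, Pi.prod, map_smul, Lm_smul, RingHom.id_apply,
          Prod.smul_mk, Prod.smul_fst, Prod.smul_snd, smul_add]
        refine Prod.ext ?_ ?_ <;> simp }

variable {k D W}

lemma Psi_ι (c : D →ₗ[k] Module.End k (TensorAlgebra k D ⊗[k] W)) (f : D)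
    (p : (TensorAlgebra k D ⊗[k] W) × (TensorAlgebra k D ⊗[k] W)) :
    Psi k D W c (TensorAlgebra.ι k f) p
      = (Lm k D W (TensorAlgebra.ι k f) p.1 + c f p.2, Lm k D W (TensorAlgebra.ι k f) p.2) := by
  rw [Psi, TensorAlgebra.lift_ι_apply]
  simp only [LinearMap.coe_mk, AddHom.coe_mk, LinearMap.add_apply, LinearMap.prodMap_apply,
    LinearMap.prod_apply, LinearMap.comp_apply, LinearMap.snd_apply, LinearMap.zero_apply,
    Function.prod, Prod.mk_add_mk, add_zero]

lemma Psi_snd (c : D →ₗ[k] Module.End k (TensorAlgebra k D ⊗[k] W)) (a : TensorAlgebra k D)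
    (p : (TensorAlgebra k D ⊗[k] W) × (TensorAlgebra k D ⊗[k] W)) :
    (Psi k D W c a p).2 = Lm k D W a p.2 := by
  induction a using TensorAlgebra.induction generalizing p with
  | algebraMap r => rw [AlgHom.commutes, Lm_algebraMap]; simp [Module.algebraMap_end_apply]
  | ι f => rw [Psi_ι]
  | mul a b ha hb => rw [map_mul, Lm_mul]; simp only [Module.End.mul_apply, LinearMap.comp_apply]; rw [ha, hb]
  | add a b ha hb =>
      rw [map_add, Lm_add]
      simp only [LinearMap.add_apply, Prod.snd_add]
      rw [ha, hb]

lemma Psi_fst_zero (c : D →ₗ[k] Module.End k (TensorAlgebra k D ⊗[k] W)) (a : TensorAlgebra k D)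
    (u : TensorAlgebra k D ⊗[k] W) :
    Psi k D W c a (u, 0) = (Lm k D W a u, 0) := by
  induction a using TensorAlgebra.induction generalizing u with
  | algebraMap r => rw [AlgHom.commutes, Lm_algebraMap]; simp [Module.algebraMap_end_apply, Prod.smul_mk]
  | ι f => rw [Psi_ι]; simp
  | mul a b ha hb =>
      rw [map_mul, Lm_mul]
      simp only [Module.End.mul_apply, LinearMap.comp_apply]
      rw [hb, ha]
  | add a b ha hb =>
      rw [map_add, Lm_add]
      simp only [LinearMap.add_apply]
      rw [ha, hb, Prod.mk_add_mk, add_zero]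

variable (k D W)

/-- The `(ρ̂,ρ̂)`-derivation `σ_c` of `T(D)` with values in `End (T(D) ⊗ W)`. -/
noncomputable def sig (c : D →ₗ[k] Module.End k (TensorAlgebra k D ⊗[k] W)) :
    TensorAlgebra k D →ₗ[k] Module.End k (TensorAlgebra k D ⊗[k] W) where
  toFun a := LinearMap.fst k _ _ ∘ₗ (Psi k D W c a) ∘ₗ LinearMap.inr k _ _
  map_add' a b := by ext u; simp [map_add]
  map_smul' r a := by ext u; simp [map_smul]

variable {k D W}

lemma sig_apply (c : D →ₗ[k] Module.End k (TensorAlgebra k D ⊗[k] W)) (a : TensorAlgebra k D)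
    (u : TensorAlgebra k D ⊗[k] W) :
    sig k D W c a u = (Psi k D W c a (0, u)).1 := rfl

@[simp] lemma sig_one (c : D →ₗ[k] Module.End k (TensorAlgebra k D ⊗[k] W))
    (u : TensorAlgebra k D ⊗[k] W) :
    sig k D W c 1 u = 0 := by
  rw [sig_apply, map_one]; rfl

@[simp] lemma sig_ι (c : D →ₗ[k] Module.End k (TensorAlgebra k D ⊗[k] W)) (f : D)
    (u : TensorAlgebra k D ⊗[k] W) :
    sig k D W c (TensorAlgebra.ι k f) u = c f u := by
  rw [sig_apply, Psi_ι]; simp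

lemma sig_mul (c : D →ₗ[k] Module.End k (TensorAlgebra k D ⊗[k] W)) (a b : TensorAlgebra k D)
    (u : TensorAlgebra k D ⊗[k] W) :
    sig k D W c (a * b) u = Lm k D W a (sig k D W c b u) + sig k D W c a (Lm k D W b u) := by
  rw [sig_apply, map_mul]
  have h : Psi k D W c b (0, u) = (sig k D W c b u, Lm k D W b u) := by
    refine Prod.ext rfl ?_
    rw [Psi_snd]
  simp only [Module.End.mul_apply, h]
  have h2 : ((sig k D W c b u : TensorAlgebra k D ⊗[k] W), Lm k D W b u)
      = ((sig k D W c b u, 0) : _ × _) + (0, Lm k D W b u) := by simp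
  rw [h2, map_add, Psi_fst_zero]
  rfl

variable (k D W)

/-- The twisted-derivation operator on `T(D) ⊗ W` with cocycle `c` and value `O₀` on `1 ⊗ W`. -/
noncomputable def Ocon (c : D →ₗ[k] Module.End k (TensorAlgebra k D ⊗[k] W))
    (O₀ : W →ₗ[k] TensorAlgebra k D ⊗[k] W) :
    Module.End k (TensorAlgebra k D ⊗[k] W) :=
  TensorProduct.lift
    (LinearMap.mk₂ k (fun a w => sig k D W c a (1 ⊗ₜ w) + Lm k D W a (O₀ w))
      (fun a b w => by simp only [map_add, LinearMap.add_apply, Lm_add]; abel)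
      (fun r a w => by simp only [map_smul, LinearMap.smul_apply, Lm_smul, smul_add])
      (fun a w₁ w₂ => by simp only [tmul_add, map_add]; abel)
      (fun r a w => by simp only [tmul_smul, map_smul, smul_add]))

variable {k D W}

lemma Ocon_tmul (c : D →ₗ[k] Module.End k (TensorAlgebra k D ⊗[k] W))
    (O₀ : W →ₗ[k] TensorAlgebra k D ⊗[k] W) (a : TensorAlgebra k D) (w : W) :
    Ocon k D W c O₀ (a ⊗ₜ w) = sig k D W c a (1 ⊗ₜ w) + Lm k D W a (O₀ w) := rfl

@[simp] lemma Ocon_one_tmul (c : D →ₗ[k] Module.End k (TensorAlgebra k D ⊗[k] W))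
    (O₀ : W →ₗ[k] TensorAlgebra k D ⊗[k] W) (w : W) :
    Ocon k D W c O₀ (1 ⊗ₜ w) = O₀ w := by
  rw [Ocon_tmul, sig_one, Lm_one]; simp

/-- The key twisted-commutation property of `Ocon`. -/
lemma Ocon_comm (c : D →ₗ[k] Module.End k (TensorAlgebra k D ⊗[k] W))
    (O₀ : W →ₗ[k] TensorAlgebra k D ⊗[k] W) (f : D) (u : TensorAlgebra k D ⊗[k] W) :
    Ocon k D W c O₀ (Lm k D W (TensorAlgebra.ι k f) u)
      = Lm k D W (TensorAlgebra.ι k f) (Ocon k D W c O₀ u) + c f u := by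
  induction u using TensorProduct.induction_on with
  | zero => simp
  | tmul a w =>
      rw [Lm_tmul, Ocon_tmul, Ocon_tmul, sig_mul, Lm_mul]
      simp only [LinearMap.comp_apply, Lm_tmul, mul_one, sig_ι, map_add]
      abel
  | add u v hu hv => simp only [map_add, hu, hv]; abel

/-- Uniqueness: an operator is determined by its cocycle and its values on `1 ⊗ W`. -/
lemma Ocon_unique (c : D → Module.End k (TensorAlgebra k D ⊗[k] W))
    (O O' : Module.End k (TensorAlgebra k D ⊗[k] W))
    (h1 : ∀ f u, O (Lm k D W (TensorAlgebra.ι k f) u)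
      = Lm k D W (TensorAlgebra.ι k f) (O u) + c f u)
    (h1' : ∀ f u, O' (Lm k D W (TensorAlgebra.ι k f) u)
      = Lm k D W (TensorAlgebra.ι k f) (O' u) + c f u)
    (h0 : ∀ w : W, O (1 ⊗ₜ w) = O' (1 ⊗ₜ w)) : O = O' := by
  have key : ∀ a : TensorAlgebra k D, ∀ u, O (Lm k D W a u) - Lm k D W a (O u)
      = O' (Lm k D W a u) - Lm k D W a (O' u) := by
    intro a
    induction a using TensorAlgebra.induction with
    | algebraMap r => intro u; simp [Lm_algebraMap]
    | ι f => intro u; rw [h1, h1']; abel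
    | mul a b ha hb =>
        intro u
        rw [Lm_mul]
        simp only [LinearMap.comp_apply]
        have hb' := hb u
        have ha' := ha (Lm k D W b u)
        have e1 : O (Lm k D W a (Lm k D W b u)) - Lm k D W a (Lm k D W b (O u))
            = (O (Lm k D W a (Lm k D W b u)) - Lm k D W a (O (Lm k D W b u)))
              + Lm k D W a (O (Lm k D W b u) - Lm k D W b (O u)) := by
          rw [map_sub]; abel
        have e2 : O' (Lm k D W a (Lm k D W b u)) - Lm k D W a (Lm k D W b (O' u))
            = (O' (Lm k D W a (Lm k D W b u)) - Lm k D W a (O' (Lm k D W b u)))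
              + Lm k D W a (O' (Lm k D W b u) - Lm k D W b (O' u)) := by
          rw [map_sub]; abel
        rw [e1, e2, ha', hb']
    | add a b ha hb =>
        intro u
        rw [Lm_add]
        simp only [LinearMap.add_apply, map_add]
        have := ha u; have := hb u
        have e : ∀ (P : Module.End k (TensorAlgebra k D ⊗[k] W)),
            P (Lm k D W a u) + P (Lm k D W b u) - (Lm k D W a (P u) + Lm k D W b (P u))
            = (P (Lm k D W a u) - Lm k D W a (P u)) + (P (Lm k D W b u) - Lm k D W b (P u)) := by
          intro P; abel
        rw [e, e, ha u, hb u]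
  apply TensorProduct.ext'
  intro a w
  have h : (a ⊗ₜ[k] w : TensorAlgebra k D ⊗[k] W) = Lm k D W a (1 ⊗ₜ w) := by
    rw [Lm_tmul, mul_one]
  have k1 := key a (1 ⊗ₜ w)
  rw [h]
  have := sub_eq_sub_iff_add_eq_add.mp k1
  calc O (Lm k D W a (1 ⊗ₜ[k] w))
      = (O (Lm k D W a (1 ⊗ₜ w)) - Lm k D W a (O (1 ⊗ₜ w))) + Lm k D W a (O (1 ⊗ₜ w)) := by abel
    _ = (O' (Lm k D W a (1 ⊗ₜ w)) - Lm k D W a (O' (1 ⊗ₜ w))) + Lm k D W a (O' (1 ⊗ₜ w)) := by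
        rw [key a, h0]
    _ = O' (Lm k D W a (1 ⊗ₜ[k] w)) := by abel

lemma Ocon_add (c c' : D →ₗ[k] Module.End k (TensorAlgebra k D ⊗[k] W))
    (O₀ O₀' : W →ₗ[k] TensorAlgebra k D ⊗[k] W) :
    Ocon k D W (c + c') (O₀ + O₀') = Ocon k D W c O₀ + Ocon k D W c' O₀' := by
  refine Ocon_unique (fun f => c f + c' f) _ _ (fun f u => ?_) (fun f u => ?_) (fun w => ?_)
  · rw [Ocon_comm]; simp
  · simp only [LinearMap.add_apply, Ocon_comm, map_add]; abel
  · simp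
lemma Ocon_smul (r : k) (c : D →ₗ[k] Module.End k (TensorAlgebra k D ⊗[k] W))
    (O₀ : W →ₗ[k] TensorAlgebra k D ⊗[k] W) :
    Ocon k D W (r • c) (r • O₀) = r • Ocon k D W c O₀ := by
  refine Ocon_unique (fun f => r • c f) _ _ (fun f u => ?_) (fun f u => ?_) (fun w => ?_)
  · rw [Ocon_comm]; simp
  · simp only [LinearMap.smul_apply, Ocon_comm, map_smul, smul_add]
  · simp

lemma oneTmul_eq_zero {u : W} (h : (1 : TensorAlgebra k D) ⊗ₜ[k] u = 0) : u = 0 := by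
  have h2 : (TensorProduct.lid k W)
      ((LinearMap.rTensor W (TensorAlgebra.lift k (0 : D →ₗ[k] k)).toLinearMap)
        ((1 : TensorAlgebra k D) ⊗ₜ[k] u)) = u := by
    rw [LinearMap.rTensor_tmul]
    simp
  rw [← h2, h, map_zero, map_zero]

end IotaAux


namespace IotaAux

open TensorProduct

section Rep

variable (k : Type*) [Field k]
variable {X : Type*} [LieRing X] [LieAlgebra k X]
variable (V : Type*) [AddCommGroup V] [Module k V]
variable (W : Type*) [AddCommGroup W] [Module k W]
variable (φ : X →ₗ⁅k⁆ Module.End k V) (ρW : X →ₗ⁅k⁆ Module.End k W)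

/-- The action of `V*` on `T(V*) ⊗ W` by left multiplication. -/
noncomputable def rhat :
    Module.Dual k V →ₗ[k] Module.End k (TensorAlgebra k (Module.Dual k V) ⊗[k] W) where
  toFun f := Lm k (Module.Dual k V) W (TensorAlgebra.ι k f)
  map_add' f g := by simp only [map_add, Lm_add]
  map_smul' r f := by simp only [map_smul, Lm_smul, RingHom.id_apply]

lemma rhat_apply (f : Module.Dual k V) :
    rhat k V W f = Lm k (Module.Dual k V) W (TensorAlgebra.ι k f) := rfl

/-- The dual action as a linear map. -/
noncomputable def alf (x : X) : Module.Dual k V →ₗ[k] Module.Dual k V := -(φ x).dualMap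

lemma alf_apply (x : X) (f : Module.Dual k V) :
    alf k V φ x f = Contragredient.dualAct k V φ x f := rfl

lemma alf_add (x y : X) : alf k V φ (x + y) = alf k V φ x + alf k V φ y := by
  ext f v
  simp [alf, LinearMap.dualMap_apply, map_add]
  abel

lemma alf_smul (r : k) (x : X) : alf k V φ (r • x) = r • alf k V φ x := by
  ext f v
  simp [alf, LinearMap.dualMap_apply, map_smul]

lemma alf_lie (x y : X) (f : Module.Dual k V) :
    alf k V φ ⁅x, y⁆ f = alf k V φ x (alf k V φ y f) - alf k V φ y (alf k V φ x f) := by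
  apply LinearMap.ext; intro v
  simp only [alf, LinearMap.neg_apply, LinearMap.dualMap_apply, map_neg, neg_neg,
    LinearMap.sub_apply, LieHom.map_lie, Ring.lie_def, map_sub, Module.End.mul_apply]
  simp [LinearMap.dualMap_apply]

/-- The value-on-`1 ⊗ W` part of the action of `x : X`. -/
noncomputable def oW (x : X) : W →ₗ[k] TensorAlgebra k (Module.Dual k V) ⊗[k] W :=
  (TensorProduct.mk k (TensorAlgebra k (Module.Dual k V)) W 1) ∘ₗ (ρW x : W →ₗ[k] W)

lemma oW_apply (x : X) (w : W) :
    oW k V W ρW x w = (1 : TensorAlgebra k (Module.Dual k V)) ⊗ₜ (ρW x w) := rfl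

/-- The action of `X` on `T(V*) ⊗ W`. -/
noncomputable def rX : X →ₗ[k] Module.End k (TensorAlgebra k (Module.Dual k V) ⊗[k] W) where
  toFun x := Ocon k (Module.Dual k V) W ((rhat k V W) ∘ₗ (alf k V φ x)) (oW k V W ρW x)
  map_add' x y := by
    have h1 : (rhat k V W) ∘ₗ (alf k V φ (x + y))
        = (rhat k V W) ∘ₗ (alf k V φ x) + (rhat k V W) ∘ₗ (alf k V φ y) := by
      rw [alf_add]
      ext f
      simp [map_add]
    have h2 : oW k V W ρW (x + y) = oW k V W ρW x + oW k V W ρW y := by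
      ext w
      simp [oW_apply, map_add, tmul_add]
    rw [h1, h2, Ocon_add]
  map_smul' r x := by
    have h1 : (rhat k V W) ∘ₗ (alf k V φ (r • x)) = r • ((rhat k V W) ∘ₗ (alf k V φ x)) := by
      rw [alf_smul]
      ext f
      simp [map_smul]
    have h2 : oW k V W ρW (r • x) = r • oW k V W ρW x := by
      ext w
      simp [oW_apply, map_smul, tmul_smul]
    rw [h1, h2, Ocon_smul]
    rfl

lemma rX_apply (x : X) :
    rX k V W φ ρW x
      = Ocon k (Module.Dual k V) W ((rhat k V W) ∘ₗ (alf k V φ x)) (oW k V W ρW x) := rfl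

lemma rX_comm (x : X) (f : Module.Dual k V) (u : TensorAlgebra k (Module.Dual k V) ⊗[k] W) :
    rX k V W φ ρW x (rhat k V W f u)
      = rhat k V W f (rX k V W φ ρW x u) + rhat k V W (alf k V φ x f) u :=
  Ocon_comm _ _ f u

@[simp] lemma rX_one_tmul (x : X) (w : W) :
    rX k V W φ ρW x ((1 : TensorAlgebra k (Module.Dual k V)) ⊗ₜ w)
      = (1 : TensorAlgebra k (Module.Dual k V)) ⊗ₜ (ρW x w) :=
  Ocon_one_tmul _ _ w

set_option maxHeartbeats 1000000 in
lemma rX_lie (x y : X) :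
    rX k V W φ ρW ⁅x, y⁆ = ⁅rX k V W φ ρW x, rX k V W φ ρW y⁆ := by
  have hA := rX_comm k V W φ ρW x
  have hB := rX_comm k V W φ ρW y
  refine Ocon_unique (fun f => rhat k V W (alf k V φ ⁅x, y⁆ f)) _ _
    (fun f u => rX_comm k V W φ ρW ⁅x, y⁆ f u) (fun f u => ?_) (fun w => ?_)
  · show ⁅rX k V W φ ρW x, rX k V W φ ρW y⁆ (rhat k V W f u)
      = rhat k V W f (⁅rX k V W φ ρW x, rX k V W φ ρW y⁆ u) + rhat k V W (alf k V φ ⁅x, y⁆ f) u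
    simp only [Ring.lie_def, LinearMap.sub_apply, Module.End.mul_apply]
    rw [hB f u, map_add, hA f (rX k V W φ ρW y u), hA (alf k V φ y f) u,
        hA f u, map_add, hB f (rX k V W φ ρW x u), hB (alf k V φ x f) u, alf_lie]
    simp only [map_sub, LinearMap.sub_apply]
    abel
  · show rX k V W φ ρW ⁅x, y⁆ ((1 : TensorAlgebra k (Module.Dual k V)) ⊗ₜ w)
      = ⁅rX k V W φ ρW x, rX k V W φ ρW y⁆ ((1 : TensorAlgebra k (Module.Dual k V)) ⊗ₜ w)
    simp only [Ring.lie_def, LinearMap.sub_apply, Module.End.mul_apply, rX_one_tmul,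
      LieHom.map_lie, tmul_sub]

variable (d : V ⊗[k] Module.Dual k V →ₗ[k] X)

/-- The cocycle for the action of `v : V`. -/
noncomputable def cv (v : V) :
    Module.Dual k V →ₗ[k] Module.End k (TensorAlgebra k (Module.Dual k V) ⊗[k] W) :=
  (rX k V W φ ρW) ∘ₗ d ∘ₗ (TensorProduct.mk k V (Module.Dual k V) v)

lemma cv_apply (v : V) (f : Module.Dual k V) :
    cv k V W φ ρW d v f = rX k V W φ ρW (d (v ⊗ₜ f)) := rfl

/-- The action of `V` on `T(V*) ⊗ W`. -/
noncomputable def rv : V →ₗ[k] Module.End k (TensorAlgebra k (Module.Dual k V) ⊗[k] W) where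
  toFun v := Ocon k (Module.Dual k V) W (cv k V W φ ρW d v) 0
  map_add' v v' := by
    have h : cv k V W φ ρW d (v + v') = cv k V W φ ρW d v + cv k V W φ ρW d v' := by
      ext f
      simp [cv_apply, add_tmul, map_add]
    have h2 := Ocon_add (cv k V W φ ρW d v) (cv k V W φ ρW d v')
      (0 : W →ₗ[k] TensorAlgebra k (Module.Dual k V) ⊗[k] W) 0
    rw [add_zero] at h2
    rw [h, h2]
  map_smul' r v := by
    have h : cv k V W φ ρW d (r • v) = r • cv k V W φ ρW d v := by
      apply LinearMap.ext; intro f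
      rw [LinearMap.smul_apply, cv_apply, cv_apply, ← smul_tmul', map_smul, map_smul]
    have h2 := Ocon_smul r (cv k V W φ ρW d v)
      (0 : W →ₗ[k] TensorAlgebra k (Module.Dual k V) ⊗[k] W)
    rw [smul_zero] at h2
    rw [h, h2]
    rfl

lemma rv_comm (v : V) (f : Module.Dual k V) (u : TensorAlgebra k (Module.Dual k V) ⊗[k] W) :
    rv k V W φ ρW d v (rhat k V W f u)
      = rhat k V W f (rv k V W φ ρW d v u) + rX k V W φ ρW (d (v ⊗ₜ f)) u :=
  Ocon_comm _ _ f u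

@[simp] lemma rv_one_tmul (v : V) (w : W) :
    rv k V W φ ρW d v ((1 : TensorAlgebra k (Module.Dual k V)) ⊗ₜ w) = 0 :=
  (Ocon_one_tmul _ _ w).trans rfl

set_option maxHeartbeats 1000000 in
lemma rX_rv_lie
    (hd : ∀ (x : X) (v : V) (f : Module.Dual k V),
      ⁅x, d (v ⊗ₜ[k] f)⁆ = d (φ x v ⊗ₜ[k] f) + d (v ⊗ₜ[k] Contragredient.dualAct k V φ x f))
    (x : X) (v : V) :
    rv k V W φ ρW d (φ x v) = ⁅rX k V W φ ρW x, rv k V W φ ρW d v⁆ := by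
  have hA := rX_comm k V W φ ρW x
  have hB := rv_comm k V W φ ρW d v
  refine Ocon_unique (fun f => rX k V W φ ρW (d (φ x v ⊗ₜ f))) _ _
    (fun f u => rv_comm k V W φ ρW d (φ x v) f u) (fun f u => ?_) (fun w => ?_)
  · show ⁅rX k V W φ ρW x, rv k V W φ ρW d v⁆ (rhat k V W f u)
      = rhat k V W f (⁅rX k V W φ ρW x, rv k V W φ ρW d v⁆ u)
        + rX k V W φ ρW (d (φ x v ⊗ₜ f)) u
    have hkey : rX k V W φ ρW (d (φ x v ⊗ₜ f)) u
        = rX k V W φ ρW x (rX k V W φ ρW (d (v ⊗ₜ f)) u)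
          - rX k V W φ ρW (d (v ⊗ₜ f)) (rX k V W φ ρW x u)
          - rX k V W φ ρW (d (v ⊗ₜ alf k V φ x f)) u := by
      have hdd : d (φ x v ⊗ₜ[k] f)
          = ⁅x, d (v ⊗ₜ[k] f)⁆ - d (v ⊗ₜ[k] Contragredient.dualAct k V φ x f) := by
        rw [hd x v f]; abel
      rw [hdd, map_sub, rX_lie, alf_apply]
      simp [Ring.lie_def]
    simp only [Ring.lie_def, LinearMap.sub_apply, Module.End.mul_apply]
    rw [hB f u, map_add, hA f (rv k V W φ ρW d v u),
        hA f u, map_add, hB f (rX k V W φ ρW x u), hB (alf k V φ x f) u, hkey]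
    simp only [map_sub, map_add]
    abel
  · show rv k V W φ ρW d (φ x v) ((1 : TensorAlgebra k (Module.Dual k V)) ⊗ₜ w)
      = ⁅rX k V W φ ρW x, rv k V W φ ρW d v⁆ ((1 : TensorAlgebra k (Module.Dual k V)) ⊗ₜ w)
    simp [Ring.lie_def]

lemma rX_rhat_lie (x : X) (f : Module.Dual k V) :
    ⁅rX k V W φ ρW x, rhat k V W f⁆ = rhat k V W (alf k V φ x f) := by
  apply LinearMap.ext; intro u
  simp only [Ring.lie_def, LinearMap.sub_apply, Module.End.mul_apply]
  rw [rX_comm]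
  abel

lemma rv_rhat_lie (v : V) (f : Module.Dual k V) :
    ⁅rv k V W φ ρW d v, rhat k V W f⁆ = rX k V W φ ρW (d (v ⊗ₜ f)) := by
  apply LinearMap.ext; intro u
  simp only [Ring.lie_def, LinearMap.sub_apply, Module.End.mul_apply]
  rw [rv_comm]
  abel

/-- The algebra morphism from the tensor algebra on `V ⊕ V*` to `End (T(V*) ⊗ W)`. -/
noncomputable def AlgMap :
    TensorAlgebra k (V × Module.Dual k V) →ₐ[k]
      Module.End k (TensorAlgebra k (Module.Dual k V) ⊗[k] W) :=
  TensorAlgebra.lift k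
    ((rv k V W φ ρW d) ∘ₗ (LinearMap.fst k V (Module.Dual k V))
      + (rhat k V W) ∘ₗ (LinearMap.snd k V (Module.Dual k V)))

lemma AlgMap_ι (v : V) (f : Module.Dual k V) :
    AlgMap k V W φ ρW d (TensorAlgebra.ι k (v, f))
      = rv k V W φ ρW d v + rhat k V W f := by
  rw [AlgMap, TensorAlgebra.lift_ι_apply]
  rfl

variable {X' : Type*}

set_option maxHeartbeats 1000000 in
lemma AlgMap_compat
    (δ : X →ₗ⁅k⁆ LieDerivation k (Contragredient.F k V) (Contragredient.F k V))
    (hδ : ∀ (x : X) (v : V) (f : Module.Dual k V),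
      ((δ x (Contragredient.ιF k V (v, f)) : Contragredient.F k V) :
          TensorAlgebra k (V × Module.Dual k V))
        = TensorAlgebra.ι k (φ x v, Contragredient.dualAct k V φ x f))
    (hd : ∀ (x : X) (v : V) (f : Module.Dual k V),
      ⁅x, d (v ⊗ₜ[k] f)⁆ = d (φ x v ⊗ₜ[k] f) + d (v ⊗ₜ[k] Contragredient.dualAct k V φ x f))
    (x : X) (s : Contragredient.F k V) :
    AlgMap k V W φ ρW d ((δ x s : Contragredient.F k V) :
        TensorAlgebra k (V × Module.Dual k V))
      = ⁅rX k V W φ ρW x,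
          AlgMap k V W φ ρW d (s : TensorAlgebra k (V × Module.Dual k V))⁆ := by
  set A := AlgMap k V W φ ρW d with hA
  set Rx := rX k V W φ ρW x with hRx
  have coe_add : ∀ t t' : Contragredient.F k V,
      ((t + t' : Contragredient.F k V) : TensorAlgebra k (V × Module.Dual k V))
        = (t : TensorAlgebra k (V × Module.Dual k V)) + t' := fun _ _ => rfl
  have coe_smul : ∀ (r : k) (t : Contragredient.F k V),
      ((r • t : Contragredient.F k V) : TensorAlgebra k (V × Module.Dual k V))
        = r • (t : TensorAlgebra k (V × Module.Dual k V)) := fun _ _ => rfl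
  have hp : ∃ h : (s : TensorAlgebra k (V × Module.Dual k V)) ∈ Contragredient.F k V,
      A ((δ x (⟨(s : TensorAlgebra k (V × Module.Dual k V)), h⟩ : Contragredient.F k V) :
          Contragredient.F k V) : TensorAlgebra k (V × Module.Dual k V))
        = ⁅Rx, A (s : TensorAlgebra k (V × Module.Dual k V))⁆ := by
    refine LieSubalgebra.lieSpan_induction (R := k)
      (p := fun a _ => ∃ h : a ∈ Contragredient.F k V,
        A ((δ x (⟨a, h⟩ : Contragredient.F k V) : Contragredient.F k V) :
            TensorAlgebra k (V × Module.Dual k V)) = ⁅Rx, A a⁆)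
      ?_ ?_ ?_ ?_ ?_ s.2
    · rintro _ ⟨w, rfl⟩
      refine ⟨LieSubalgebra.subset_lieSpan ⟨w, rfl⟩, ?_⟩
      have e : (⟨TensorAlgebra.ι k w, LieSubalgebra.subset_lieSpan ⟨w, rfl⟩⟩ :
          Contragredient.F k V) = Contragredient.ιF k V (w.1, w.2) := Subtype.ext rfl
      rw [e, hδ x w.1 w.2]
      have e2 : ((Contragredient.ιF k V (w.1, w.2) : Contragredient.F k V) :
          TensorAlgebra k (V × Module.Dual k V)) = TensorAlgebra.ι k w := rfl
      rw [hA, AlgMap_ι, show (TensorAlgebra.ι k w : TensorAlgebra k (V × Module.Dual k V))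
            = TensorAlgebra.ι k (w.1, w.2) from rfl, AlgMap_ι, hRx, lie_add, rX_rhat_lie,
          ← rX_rv_lie k V W φ ρW d hd x w.1, alf_apply]
    · exact ⟨zero_mem _, by
        have e : (⟨(0 : TensorAlgebra k (V × Module.Dual k V)), zero_mem _⟩ :
            Contragredient.F k V) = 0 := Subtype.ext rfl
        rw [e, map_zero]
        show A ((0 : Contragredient.F k V) : TensorAlgebra k (V × Module.Dual k V)) = _
        have e0 : ((0 : Contragredient.F k V) :
            TensorAlgebra k (V × Module.Dual k V)) = 0 := rfl
        rw [e0, map_zero, lie_zero]⟩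
    · rintro a b _ _ ⟨ha, hpa⟩ ⟨hb, hpb⟩
      refine ⟨add_mem ha hb, ?_⟩
      have e : (⟨a + b, add_mem ha hb⟩ : Contragredient.F k V)
          = (⟨a, ha⟩ : Contragredient.F k V) + ⟨b, hb⟩ := Subtype.ext rfl
      rw [e, map_add, coe_add, map_add, hpa, hpb, map_add, lie_add]
    · rintro r a _ ⟨ha, hpa⟩
      refine ⟨LieSubalgebra.smul_mem _ r ha, ?_⟩
      have e : (⟨r • a, LieSubalgebra.smul_mem _ r ha⟩ : Contragredient.F k V)
          = r • (⟨a, ha⟩ : Contragredient.F k V) := Subtype.ext rfl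
      rw [e, map_smul, coe_smul, map_smul, hpa]
      simp [Ring.lie_def, mul_smul_comm, smul_mul_assoc, smul_sub, map_smul]
    · rintro a b _ _ ⟨ha, hpa⟩ ⟨hb, hpb⟩
      refine ⟨LieSubalgebra.lie_mem _ ha hb, ?_⟩
      have e : (⟨⁅a, b⁆, LieSubalgebra.lie_mem _ ha hb⟩ : Contragredient.F k V)
          = ⁅(⟨a, ha⟩ : Contragredient.F k V), ⟨b, hb⟩⁆ := Subtype.ext rfl
      rw [e, LieDerivation.apply_lie_eq_add, coe_add, map_add,
        LieSubalgebra.coe_bracket, LieSubalgebra.coe_bracket]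
      simp only [Ring.lie_def, map_sub, map_mul] at hpa hpb ⊢
      rw [hpa, hpb]
      simp only [mul_sub, sub_mul, mul_assoc]
      abel
  obtain ⟨h, he⟩ := hp
  have e : (⟨(s : TensorAlgebra k (V × Module.Dual k V)), h⟩ : Contragredient.F k V) = s :=
    Subtype.ext rfl
  rw [e] at he
  exact he

set_option maxHeartbeats 1000000 in
/-- The induced Lie algebra morphism on the semidirect product. -/
noncomputable def Phi
    (δ : X →ₗ⁅k⁆ LieDerivation k (Contragredient.F k V) (Contragredient.F k V))
    (hδ : ∀ (x : X) (v : V) (f : Module.Dual k V),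
      ((δ x (Contragredient.ιF k V (v, f)) : Contragredient.F k V) :
          TensorAlgebra k (V × Module.Dual k V))
        = TensorAlgebra.ι k (φ x v, Contragredient.dualAct k V φ x f))
    (hd : ∀ (x : X) (v : V) (f : Module.Dual k V),
      ⁅x, d (v ⊗ₜ[k] f)⁆ = d (φ x v ⊗ₜ[k] f) + d (v ⊗ₜ[k] Contragredient.dualAct k V φ x f)) :
    Contragredient.SD k δ →ₗ⁅k⁆ Module.End k (TensorAlgebra k (Module.Dual k V) ⊗[k] W) where
  toFun p := AlgMap k V W φ ρW d ((p.1 : Contragredient.F k V) :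
      TensorAlgebra k (V × Module.Dual k V)) + rX k V W φ ρW p.2
  map_add' p q := by
    have e : (((p + q).1 : Contragredient.F k V) : TensorAlgebra k (V × Module.Dual k V))
        = ((p.1 : Contragredient.F k V) : TensorAlgebra k (V × Module.Dual k V)) + q.1 := rfl
    have e2 : (p + q).2 = p.2 + q.2 := rfl
    rw [e, e2, map_add, map_add]
    abel
  map_smul' r p := by
    have e : (((r • p).1 : Contragredient.F k V) : TensorAlgebra k (V × Module.Dual k V))
        = r • ((p.1 : Contragredient.F k V) : TensorAlgebra k (V × Module.Dual k V)) := rfl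
    have e2 : (r • p).2 = r • p.2 := rfl
    rw [e, e2, map_smul, map_smul, RingHom.id_apply, smul_add]
  map_lie' {p q} := by
    rw [LieSemidirectProduct.bracket_def, LieSemidirectProduct.mk_fst,
      LieSemidirectProduct.mk_snd]
    have e : ((⁅p.1, q.1⁆ + δ p.2 q.1 - δ q.2 p.1 : Contragredient.F k V) :
          TensorAlgebra k (V × Module.Dual k V))
        = ((⁅p.1, q.1⁆ : Contragredient.F k V) : TensorAlgebra k (V × Module.Dual k V))
          + ((δ p.2 q.1 : Contragredient.F k V) : TensorAlgebra k (V × Module.Dual k V))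
          - ((δ q.2 p.1 : Contragredient.F k V) : TensorAlgebra k (V × Module.Dual k V)) := rfl
    rw [e, map_sub, map_add, LieSubalgebra.coe_bracket,
      AlgMap_compat k V W φ ρW d δ hδ hd p.2 q.1,
      AlgMap_compat k V W φ ρW d δ hδ hd q.2 p.1, rX_lie]
    simp only [Ring.lie_def, map_sub, map_mul, mul_add, add_mul, mul_sub, sub_mul]
    abel
  
lemma Phi_rel
    (δ : X →ₗ⁅k⁆ LieDerivation k (Contragredient.F k V) (Contragredient.F k V))
    (hδ : ∀ (x : X) (v : V) (f : Module.Dual k V),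
      ((δ x (Contragredient.ιF k V (v, f)) : Contragredient.F k V) :
          TensorAlgebra k (V × Module.Dual k V))
        = TensorAlgebra.ι k (φ x v, Contragredient.dualAct k V φ x f))
    (hd : ∀ (x : X) (v : V) (f : Module.Dual k V),
      ⁅x, d (v ⊗ₜ[k] f)⁆ = d (φ x v ⊗ₜ[k] f) + d (v ⊗ₜ[k] Contragredient.dualAct k V φ x f))
    (v : V) (f : Module.Dual k V) :
    Phi k V W φ ρW d δ hδ hd (LieSemidirectProduct.mk δ
      ⁅Contragredient.ιF k V (v, 0), Contragredient.ιF k V (0, f)⁆ (-(d (v ⊗ₜ[k] f)))) = 0 := by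
  show AlgMap k V W φ ρW d
      ((⁅Contragredient.ιF k V (v, 0), Contragredient.ιF k V (0, f)⁆ : Contragredient.F k V) :
        TensorAlgebra k (V × Module.Dual k V))
    + rX k V W φ ρW (-(d (v ⊗ₜ[k] f))) = 0
  rw [LieSubalgebra.coe_bracket, map_neg]
  have e1 : ((Contragredient.ιF k V (v, 0) : Contragredient.F k V) :
      TensorAlgebra k (V × Module.Dual k V)) = TensorAlgebra.ι k ((v, 0) :
        V × Module.Dual k V) := rfl
  have e2 : ((Contragredient.ιF k V (0, f) : Contragredient.F k V) :
      TensorAlgebra k (V × Module.Dual k V)) = TensorAlgebra.ι k ((0, f) :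
        V × Module.Dual k V) := rfl
  rw [Ring.lie_def, map_sub, map_mul, map_mul, e1, e2, AlgMap_ι, AlgMap_ι, map_zero, map_zero,
    add_zero, zero_add]
  have := rv_rhat_lie k V W φ ρW d v f
  rw [Ring.lie_def] at this
  rw [← this]
  abel

end Rep

end IotaAux

namespace Contragredient

/-- If `𝔛` has enough modules, the canonical map `ι₀ : 𝔛 → g̃(ρ, d)` from `𝔛` to the auxiliary
contragredient Lie algebra is injective.  Here `φ` is the representation of `𝔛` on `V`, `δ` is
the extension of the actions of `𝔛` on `V` and `V*` to an action on the free Lie algebra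
`FLie(V ⊕ V*)` by derivations, and `d : V ⊗ V* → 𝔛` is a morphism of `𝔛`-modules. -/
theorem iota_zero_injective
    {k : Type*} [Field k]
    {X : Type*} [LieRing X] [LieAlgebra k X] [FiniteDimensional k X]
    {V : Type*} [AddCommGroup V] [Module k V] [FiniteDimensional k V]
    (φ : X →ₗ⁅k⁆ Module.End k V)
    (δ : X →ₗ⁅k⁆ LieDerivation k (F k V) (F k V))
    (hδ : ∀ (x : X) (v : V) (f : Module.Dual k V),
      ((δ x (ιF k V (v, f)) : F k V) : TensorAlgebra k (V × Module.Dual k V))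
        = TensorAlgebra.ι k (φ x v, dualAct k V φ x f))
    (d : V ⊗[k] Module.Dual k V →ₗ[k] X)
    (hd : ∀ (x : X) (v : V) (f : Module.Dual k V),
      ⁅x, d (v ⊗ₜ[k] f)⁆ = d (φ x v ⊗ₜ[k] f) + d (v ⊗ₜ[k] dualAct k V φ x f))
    (henough : HasEnoughModules.{w} k X) :
    Function.Injective (ι₀ k δ d) := by
  have key : ∀ x : X, x ≠ 0 → ι₀ k δ d x ≠ 0 := by
    intro x hne h0
    obtain ⟨W, iW1, iW2, ρW, hρW⟩ := henough x hne
    letI := iW1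
    letI := iW2
    have hker : I0 k δ d ≤ (IotaAux.Phi k V W φ ρW d δ hδ hd).ker := by
      apply LieSubmodule.lieSpan_le.mpr
      rintro p ⟨v, f, rfl⟩
      exact LieHom.mem_ker.mpr (IotaAux.Phi_rel k V W φ ρW d δ hδ hd v f)
    have hmem : LieSemidirectProduct.inr δ x ∈ I0 k δ d := by
      have h1 : (I0 k δ d).toSubmodule.mkQ (LieSemidirectProduct.inr δ x) = 0 := h0
      rwa [Submodule.mkQ_apply, Submodule.Quotient.mk_eq_zero] at h1
    have hzero : IotaAux.Phi k V W φ ρW d δ hδ hd (LieSemidirectProduct.inr δ x) = 0 :=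
      LieHom.mem_ker.mp (hker hmem)
    have heq : IotaAux.Phi k V W φ ρW d δ hδ hd (LieSemidirectProduct.inr δ x)
        = IotaAux.rX k V W φ ρW x := by
      show IotaAux.AlgMap k V W φ ρW d ((0 : F k V) : TensorAlgebra k (V × Module.Dual k V))
          + IotaAux.rX k V W φ ρW x = IotaAux.rX k V W φ ρW x
      rw [show ((0 : F k V) : TensorAlgebra k (V × Module.Dual k V)) = 0 from rfl, map_zero,
        zero_add]
    have hrx : IotaAux.rX k V W φ ρW x = 0 := heq.symm.trans hzero
    obtain ⟨w, hw⟩ : ∃ w, ρW x w ≠ 0 := by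
      by_contra hc
      push_neg at hc
      exact hρW (LinearMap.ext fun w => by rw [hc w]; rfl)
    have h1 : IotaAux.rX k V W φ ρW x ((1 : TensorAlgebra k (Module.Dual k V)) ⊗ₜ w)
        = (1 : TensorAlgebra k (Module.Dual k V)) ⊗ₜ (ρW x w) :=
      IotaAux.rX_one_tmul k V W φ ρW x w
    rw [hrx] at h1
    have h2 : (1 : TensorAlgebra k (Module.Dual k V)) ⊗ₜ[k] (ρW x w) = 0 := by
      rw [← h1]
      rfl
    exact hw (IotaAux.oneTmul_eq_zero h2)
  intro a b hab
  by_contra hne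
  refine key (a - b) (sub_ne_zero.mpr hne) ?_
  rw [map_sub, hab, sub_self]

end Contragredient
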